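/- For 0 < r < 2μ/L², μ ≤ L, and 0 < α < (-p + √(p² + 16q))/8 where p = 4 + 4r + rL², q = 2rμ - r²L², set m = 1 + 3α + 2rα + 2α² + rαL² + r²L² - 2rμ and n = α + 2rα + 2α². Then m + n < 1. -/
import Mathlib


theorem stmt_9 (r μ L α : ℝ) (hμ : 0 < μ) (hμL : μ ≤ L)
    (hr : 0 < r) (hr2 : r < 2 * μ / L ^ 2) (hα : 0 < α)
    (hα2 : α < (-(4 + 4 * r + r * L ^ 2) +
        Real.sqrt ((4 + 4 * r + r * L ^ 2) ^ 2 + 16 * (2 * r * μ - r ^ 2 * L ^ 2))) / 8) :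
    (1 + 3 * α + 2 * r * α + 2 * α ^ 2 + r * α * L ^ 2 + r ^ 2 * L ^ 2 - 2 * r * μ) +
      (α + 2 * r * α + 2 * α ^ 2) < 1 := by
  have hL : 0 < L := lt_of_lt_of_le hμ hμL
  have hL2 : 0 < L ^ 2 := by positivity
  have hq : 0 < 2 * r * μ - r ^ 2 * L ^ 2 := by
    nlinarith [(lt_div_iff₀ hL2).mp hr2]
  set p : ℝ := 4 + 4 * r + r * L ^ 2 with hp
  set D : ℝ := p ^ 2 + 16 * (2 * r * μ - r ^ 2 * L ^ 2) with hD
  have hDpos : 0 ≤ D := by nlinarith [sq_nonneg p]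
  have hsq : Real.sqrt D ^ 2 = D := Real.sq_sqrt hDpos
  have hα2' : 8 * α + p < Real.sqrt D := by linarith
  have hppos : 0 < p := by positivity
  have h8 : 0 < 8 * α + p := by positivity
  have hlt : (8 * α + p) ^ 2 < D := by
    calc (8 * α + p) ^ 2 < Real.sqrt D ^ 2 := by
          exact pow_lt_pow_left₀ hα2' h8.le (by norm_num)
      _ = D := hsq
  nlinarith [hlt]
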